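/- arXiv:2501.00567 — 5 statements merged into one kernel-verified Lean document; each statement's English description precedes it below -/
import Mathlib

section
/- Let G be a finite triangle-free simple graph, let w : V(G) → ℝ be a weight function with w(v) > 0 for every vertex v and total weight w(V(G)) = 1, and let ε ∈ (0,1). Define w'(y) = w(y)·exp(ε·w(N_G(y))) for every vertex y, and for a vertex x let G_x denote the induced subgraph of G obtained by deleting x together with all its neighbors. Then for every vertex v of G: ((1−ε)·w'(N_G(v)) + Σ_{x ∈ V(G)\({v} ∪ N_G(v))} ε·w(x)·w'(N_{G_x}(v))) / (w'(v)·(1 − ε·w({v} ∪ N_G(v)))) ≤ (w(N_G(v))/w(v))·exp(ε·(w(v) − w(N_G(v)))). -/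
open Finset

lemma aux_mono (a b c : ℝ) (ha : 0 ≤ a) (hab : a ≤ b) (hc : 0 ≤ c) (hac : a + c ≤ 1) :
    Real.exp b * (1 - c - b) ≤ Real.exp a * (1 - c - a) := by
  have e1 : Real.exp b = Real.exp a * Real.exp (b - a) := by
    rw [← Real.exp_add]; ring_nf
  have e2 : Real.exp (b - a) * Real.exp (a - b) = 1 := by
    rw [← Real.exp_add]; simp
  have e3 : 1 - (b - a) ≤ Real.exp (a - b) := by
    have := Real.add_one_le_exp (a - b); linarith
  have e4 : (0:ℝ) < Real.exp a := Real.exp_pos a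
  have e5 : (0:ℝ) < Real.exp (b - a) := Real.exp_pos _
  have h0 : (0:ℝ) ≤ 1 - c - a := by linarith
  have h4 : 1 - c - b ≤ (1 - c - a) * Real.exp (a - b) := by
    nlinarith [mul_le_mul_of_nonneg_left e3 h0,
      mul_le_mul_of_nonneg_right (show 1 - c - a ≤ 1 by linarith) (show (0:ℝ) ≤ b - a by linarith)]
  have key : Real.exp (b - a) * (1 - c - b) ≤ 1 - c - a := by
    have := mul_le_mul_of_nonneg_left h4 e5.le
    nlinarith [e2]
  rw [e1]
  nlinarith [mul_le_mul_of_nonneg_left key e4.le]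

/-- the Claim in the proof of the key technical theorem: bound on the
weighted neighborhood expression for a triangle-free graph with normalized positive
weights. Here `w' y = w y · exp(ε · w(N_G(y)))` and, for a vertex `x`, the neighbors of
`v` in `G_x = G − ({x} ∪ N_G(x))` are the neighbors of `v` in `G` outside
`{x} ∪ N_G(x)`. -/
theorem claim_neighborhood_weight_bound {V : Type*} [Fintype V] [DecidableEq V]
    (G : SimpleGraph V) [DecidableRel G.Adj] (hG : G.CliqueFree 3)
    (w : V → ℝ) (hw : ∀ v, 0 < w v) (hw1 : ∑ v : V, w v = 1)
    (ε : ℝ) (hε : 0 < ε) (hε1 : ε < 1)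
    (w' : V → ℝ)
    (hw' : ∀ y : V, w' y = w y * Real.exp (ε * ∑ u ∈ G.neighborFinset y, w u))
    (v : V) :
    ((1 - ε) * (∑ y ∈ G.neighborFinset v, w' y) +
        ∑ x ∈ Finset.univ \ insert v (G.neighborFinset v),
          ε * w x *
            ∑ y ∈ G.neighborFinset v \ insert x (G.neighborFinset x), w' y) /
      (w' v * (1 - ε * ∑ u ∈ insert v (G.neighborFinset v), w u)) ≤
    ((∑ u ∈ G.neighborFinset v, w u) / w v) *
      Real.exp (ε * (w v - ∑ u ∈ G.neighborFinset v, w u)) := by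
  set Nv := G.neighborFinset v with hNv
  set W : ℝ := ∑ u ∈ Nv, w u with hWdef
  have hsum_le_one : ∀ s : Finset V, ∑ u ∈ s, w u ≤ 1 := by
    intro s
    rw [← hw1]
    exact Finset.sum_le_sum_of_subset_of_nonneg (Finset.subset_univ s)
      (fun i _ _ => (hw i).le)
  have hW0 : 0 ≤ W := Finset.sum_nonneg fun i _ => (hw i).le
  have hvNv : v ∉ Nv := by simp [hNv]
  have hins : ∑ u ∈ insert v Nv, w u = w v + W := Finset.sum_insert hvNv
  have hWv1 : w v + W ≤ 1 := by rw [← hins]; exact hsum_le_one _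
  have hden : 0 < 1 - ε * (w v + W) := by
    nlinarith [hw v]
  have hw'v : 0 < w' v := by
    rw [hw' v]; exact mul_pos (hw v) (Real.exp_pos _)
  have hdenpos : 0 < w' v * (1 - ε * ∑ u ∈ insert v Nv, w u) := by
    rw [hins]; exact mul_pos hw'v hden
  rw [div_le_iff₀ hdenpos]
  -- rewrite the double sum
  have hswap : (∑ x ∈ Finset.univ \ insert v Nv,
        ε * w x * ∑ y ∈ Nv \ insert x (G.neighborFinset x), w' y)
      = ∑ y ∈ Nv, w' y *
          (ε * ∑ x ∈ (Finset.univ \ insert v Nv) \ insert y (G.neighborFinset y), w x) := by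
    have hL : ∀ x : V, (∑ y ∈ Nv \ insert x (G.neighborFinset x), w' y)
        = ∑ y ∈ Nv, if x ∈ insert y (G.neighborFinset y) then 0 else w' y := by
      intro x
      rw [show Nv \ insert x (G.neighborFinset x)
          = Nv.filter (fun y => x ∉ insert y (G.neighborFinset y)) by
        ext y
        simp only [Finset.mem_sdiff, Finset.mem_filter, Finset.mem_insert,
          SimpleGraph.mem_neighborFinset, not_or]
        constructor
        · rintro ⟨h1, h2, h3⟩
          exact ⟨h1, fun h => h2 h.symm, fun h => h3 (G.adj_symm h)⟩
        · rintro ⟨h1, h2, h3⟩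
          exact ⟨h1, fun h => h2 h.symm, fun h => h3 (G.adj_symm h)⟩]
      rw [Finset.sum_filter]
      exact Finset.sum_congr rfl fun y _ => by
        by_cases h : x ∈ insert y (G.neighborFinset y) <;> simp [h]
    have hR : ∀ y : V, (∑ x ∈ (Finset.univ \ insert v Nv) \ insert y (G.neighborFinset y), w x)
        = ∑ x ∈ Finset.univ \ insert v Nv, if x ∈ insert y (G.neighborFinset y) then 0 else w x := by
      intro y
      rw [Finset.sdiff_eq_filter ((Finset.univ \ insert v Nv)) _, Finset.sum_filter]
      exact Finset.sum_congr rfl fun x _ => by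
        by_cases h : x ∈ insert y (G.neighborFinset y) <;> simp [h]
    calc (∑ x ∈ Finset.univ \ insert v Nv,
            ε * w x * ∑ y ∈ Nv \ insert x (G.neighborFinset x), w' y)
        = ∑ x ∈ Finset.univ \ insert v Nv, ∑ y ∈ Nv,
            (if x ∈ insert y (G.neighborFinset y) then 0 else ε * w x * w' y) := by
          refine Finset.sum_congr rfl fun x _ => ?_
          rw [hL x, Finset.mul_sum]
          refine Finset.sum_congr rfl fun y _ => ?_
          by_cases h : x ∈ insert y (G.neighborFinset y) <;> simp [h]
      _ = ∑ y ∈ Nv, ∑ x ∈ Finset.univ \ insert v Nv,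
            (if x ∈ insert y (G.neighborFinset y) then 0 else ε * w x * w' y) :=
          Finset.sum_comm
      _ = ∑ y ∈ Nv, w' y *
            (ε * ∑ x ∈ (Finset.univ \ insert v Nv) \ insert y (G.neighborFinset y), w x) := by
          refine Finset.sum_congr rfl fun y _ => ?_
          rw [hR y, Finset.mul_sum, Finset.mul_sum]
          refine Finset.sum_congr rfl fun x _ => ?_
          by_cases h : x ∈ insert y (G.neighborFinset y) <;> simp [h] <;> ring
  rw [hswap]
  -- per-vertex bound
  have key : ∀ y ∈ Nv,
      (1 - ε) * w' y + w' y *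
          (ε * ∑ x ∈ (Finset.univ \ insert v Nv) \ insert y (G.neighborFinset y), w x)
        ≤ w y * (Real.exp (ε * w v) * (1 - ε * w v - ε * W)) := by
    intro y hy
    have hadj : G.Adj v y := by rwa [← SimpleGraph.mem_neighborFinset]
    set Ty : ℝ := ∑ u ∈ G.neighborFinset y, w u with hTydef
    have hvy : v ∈ G.neighborFinset y := by
      rw [SimpleGraph.mem_neighborFinset]; exact hadj.symm
    have hTy : w v ≤ Ty := Finset.single_le_sum (fun i _ => (hw i).le) hvy
    have hdisj : Disjoint Nv (G.neighborFinset y) := by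
      rw [Finset.disjoint_left]
      intro u hu hu'
      rw [hNv, SimpleGraph.mem_neighborFinset] at hu
      rw [SimpleGraph.mem_neighborFinset] at hu'
      exact hG {v, y, u} (SimpleGraph.is3Clique_triple_iff.2 ⟨hadj, hu, hu'⟩)
    have hset : (Finset.univ \ insert v Nv) \ insert y (G.neighborFinset y)
        = Finset.univ \ (insert v Nv ∪ insert y (G.neighborFinset y)) := by
      ext x
      simp only [Finset.mem_sdiff, Finset.mem_union, Finset.mem_insert,
        Finset.mem_univ, true_and, not_or]
    have hunion : W + Ty ≤ ∑ u ∈ insert v Nv ∪ insert y (G.neighborFinset y), w u := by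
      have hsub : Nv ∪ G.neighborFinset y ⊆ insert v Nv ∪ insert y (G.neighborFinset y) :=
        Finset.union_subset_union (Finset.subset_insert _ _) (Finset.subset_insert _ _)
      calc W + Ty = ∑ u ∈ Nv ∪ G.neighborFinset y, w u := (Finset.sum_union hdisj).symm
        _ ≤ _ := Finset.sum_le_sum_of_subset_of_nonneg hsub (fun i _ _ => (hw i).le)
    have hxsum : (∑ x ∈ (Finset.univ \ insert v Nv) \ insert y (G.neighborFinset y), w x)
        ≤ 1 - W - Ty := by
      rw [hset, Finset.sum_sdiff_eq_sub (Finset.subset_univ _), hw1]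
      linarith
    have h1 : (1 - ε) + ε * (∑ x ∈ (Finset.univ \ insert v Nv) \ insert y (G.neighborFinset y), w x)
        ≤ 1 - ε * W - ε * Ty := by nlinarith
    have h2 : Real.exp (ε * Ty) * (1 - ε * W - ε * Ty)
        ≤ Real.exp (ε * w v) * (1 - ε * W - ε * w v) := by
      refine aux_mono (ε * w v) (ε * Ty) (ε * W) (mul_nonneg hε.le (hw v).le)
        (by nlinarith) (mul_nonneg hε.le hW0) (by nlinarith)
    rw [hw' y, ← hTydef]
    have hwy := (hw y).le
    have hexp := (Real.exp_pos (ε * Ty)).le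
    nlinarith [mul_le_mul_of_nonneg_left h1 (mul_nonneg hwy hexp),
      mul_le_mul_of_nonneg_left h2 hwy]
  -- assemble
  have hsum : (1 - ε) * (∑ y ∈ Nv, w' y) +
      ∑ y ∈ Nv, w' y *
        (ε * ∑ x ∈ (Finset.univ \ insert v Nv) \ insert y (G.neighborFinset y), w x)
      ≤ W * (Real.exp (ε * w v) * (1 - ε * w v - ε * W)) := by
    rw [Finset.mul_sum, ← Finset.sum_add_distrib, hWdef, Finset.sum_mul]
    exact Finset.sum_le_sum key
  have hRHSden : ((∑ u ∈ Nv, w u) / w v) * Real.exp (ε * (w v - ∑ u ∈ Nv, w u)) *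
        (w' v * (1 - ε * ∑ u ∈ insert v Nv, w u))
      = W * (Real.exp (ε * w v) * (1 - ε * w v - ε * W)) := by
    have hexp : Real.exp (ε * (w v - W)) * Real.exp (ε * W) = Real.exp (ε * w v) := by
      rw [← Real.exp_add]; ring_nf
    have hv0 : w v ≠ 0 := (hw v).ne'
    rw [hw' v, hins, ← hNv, ← hWdef, ← hexp]
    field_simp
    ring
  rw [hRHSden]
  exact hsum
end

section
/- Let G be a finite simple graph, let v be a vertex of G, and let r be a real number with r ≥ d_G(v) + 1. If the graph G − v (the induced subgraph on V(G)\{v}) admits a probability distribution on its independent sets under which every vertex of G − v is covered with probability at least 1/r, then G admits a probability distribution on its independent sets under which every vertex of G (including v) is covered with probability at least 1/r. In particular, the fractional chromatic number satisfies χ_f(G) ≤ max{χ_f(G − v), d_G(v) + 1}. -/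
open Finset

/-- `I` is an independent set of `G`: no two of its vertices are adjacent. -/
def IsIndepFinset {V : Type*} (G : SimpleGraph V) (I : Finset V) : Prop :=
  ∀ u ∈ I, ∀ v ∈ I, ¬ G.Adj u v

namespace FracDel

variable {V : Type*} [Fintype V] [DecidableEq V]

omit [Fintype V] [DecidableEq V] in
lemma indep_subset {G : SimpleGraph V} {I J : Finset V} (h : IsIndepFinset G J)
    (hIJ : I ⊆ J) : IsIndepFinset G I :=
  fun a ha b hb => h a (hIJ ha) b (hIJ hb)

/-- coverage of vertex `u` under the weighting `q`. -/
noncomputable def cov (q : Finset V → ℝ) (u : V) : ℝ :=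
  ∑ J ∈ univ.filter (fun J => u ∈ J), q J

/-- invariant for intermediate distributions: a probability distribution on
independent sets of `G` avoiding `v`, covering every other vertex with prob `≥ 1/r`. -/
def GoodDist (G : SimpleGraph V) (v : V) (r : ℝ) (q : Finset V → ℝ) : Prop :=
  (∀ J, 0 ≤ q J) ∧ (∀ J, q J ≠ 0 → IsIndepFinset G J ∧ v ∉ J) ∧
    ((∑ J, q J) = 1) ∧ (∀ u, u ≠ v → 1/r ≤ cov q u)

lemma sum_insert_bij (a : V) (f : Finset V → ℝ) (P : Finset V → Prop) [DecidablePred P] :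
    ∑ J ∈ univ.filter (fun J => a ∉ J ∧ P J), f (insert a J)
      = ∑ J ∈ univ.filter (fun J => a ∈ J ∧ P (J.erase a)), f J := by
  refine Finset.sum_nbij' (fun J => insert a J) (fun J => J.erase a) ?_ ?_ ?_ ?_ ?_
  · intro J hJ
    simp only [mem_filter, mem_univ, true_and] at hJ ⊢
    exact ⟨mem_insert_self a J, by rw [erase_insert hJ.1]; exact hJ.2⟩
  · intro J hJ
    simp only [mem_filter, mem_univ, true_and] at hJ ⊢
    exact ⟨notMem_erase a J, hJ.2⟩
  · intro J hJ
    simp only [mem_filter, mem_univ, true_and] at hJ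
    exact erase_insert hJ.1
  · intro J hJ
    simp only [mem_filter, mem_univ, true_and] at hJ
    exact insert_erase hJ.1
  · intro J _; rfl

/-- shrinking the coverage of a single vertex `u₀` down to `1/r`, keeping
all other coverages unchanged. -/
lemma shrink {G : SimpleGraph V} {v : V} {r : ℝ} (hr : 0 < r) {q : Finset V → ℝ}
    (hq : GoodDist G v r q) (u₀ : V) :
    ∃ q₂ : Finset V → ℝ, GoodDist G v r q₂ ∧ (∀ u, u ≠ u₀ → cov q₂ u = cov q u) ∧
      cov q₂ u₀ ≤ 1/r := by
  obtain ⟨hpos, hsupp, hsum, hcov⟩ := hq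
  by_cases hc : cov q u₀ ≤ 1/r
  · exact ⟨q, ⟨hpos, hsupp, hsum, hcov⟩, fun u _ => rfl, hc⟩
  push_neg at hc
  have hr' : (0:ℝ) < 1/r := by positivity
  set c := cov q u₀ with hcdef
  have hc0 : 0 < c := lt_trans hr' hc
  set t := (c - 1/r)/c with htdef
  have ht0 : 0 ≤ t := div_nonneg (by linarith) hc0.le
  have ht1 : t ≤ 1 := by rw [div_le_one hc0]; linarith
  have htc : t * c = c - 1/r := div_mul_cancel₀ _ hc0.ne'
  set q₂ : Finset V → ℝ :=
    fun J => if u₀ ∈ J then (1-t) * q J else q J + t * q (insert u₀ J) with hq₂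
  have key : ∀ f : Finset V → ℝ,
      ∑ J ∈ univ.filter (fun J => u₀ ∉ J), f (insert u₀ J)
        = ∑ J ∈ univ.filter (fun J => u₀ ∈ J), f J := by
    intro f
    have := sum_insert_bij u₀ f (fun _ => True)
    simpa using this
  have hsplit : ∀ f : Finset V → ℝ, ∑ J, f J =
      ∑ J ∈ univ.filter (fun J => u₀ ∈ J), f J
        + ∑ J ∈ univ.filter (fun J => u₀ ∉ J), f J := by
    intro f
    exact (Finset.sum_filter_add_sum_filter_not univ (fun J => u₀ ∈ J) f).symm
  have hq₂mem : ∀ J, u₀ ∈ J → q₂ J = (1-t) * q J := by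
    intro J hJ; simp [hq₂, hJ]
  have hq₂nmem : ∀ J, u₀ ∉ J → q₂ J = q J + t * q (insert u₀ J) := by
    intro J hJ; simp [hq₂, hJ]
  have hcovu₀ : cov q₂ u₀ = 1/r := by
    have : cov q₂ u₀ = ∑ J ∈ univ.filter (fun J => u₀ ∈ J), (1-t) * q J := by
      refine Finset.sum_congr rfl fun J hJ => ?_
      simp only [mem_filter] at hJ
      exact hq₂mem J hJ.2
    rw [this, ← Finset.mul_sum]
    have : ∑ J ∈ univ.filter (fun J => u₀ ∈ J), q J = c := rfl
    rw [this]
    have h2 : (1-t) * c = c - t * c := by ring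
    rw [h2, htc]; ring
  have hcoveq : ∀ u, u ≠ u₀ → cov q₂ u = cov q u := by
    intro u hu
    have split2 : ∀ f : Finset V → ℝ,
        ∑ J ∈ univ.filter (fun J => u ∈ J), f J
          = ∑ J ∈ univ.filter (fun J => u₀ ∈ J ∧ u ∈ J), f J
            + ∑ J ∈ univ.filter (fun J => u₀ ∉ J ∧ u ∈ J), f J := by
      intro f
      rw [← Finset.sum_filter_add_sum_filter_not (univ.filter (fun J => u ∈ J))
        (fun J => u₀ ∈ J) f, Finset.filter_filter, Finset.filter_filter]
      congr 1 <;> (apply Finset.sum_congr _ (fun _ _ => rfl)) <;>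
        (apply Finset.filter_congr; intro J _; tauto)
    have key2 : ∑ J ∈ univ.filter (fun J => u₀ ∉ J ∧ u ∈ J), q (insert u₀ J)
        = ∑ J ∈ univ.filter (fun J => u₀ ∈ J ∧ u ∈ J), q J := by
      have := sum_insert_bij u₀ q (fun J => u ∈ J)
      rw [this]
      apply Finset.sum_congr _ (fun _ _ => rfl)
      apply Finset.filter_congr; intro J _
      simp only [Finset.mem_erase]
      constructor
      · rintro ⟨h1, _, h2⟩; exact ⟨h1, h2⟩
      · rintro ⟨h1, h2⟩; exact ⟨h1, hu, h2⟩
    unfold cov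
    rw [split2 q₂, split2 q]
    have e1 : ∑ J ∈ univ.filter (fun J => u₀ ∈ J ∧ u ∈ J), q₂ J
        = ∑ J ∈ univ.filter (fun J => u₀ ∈ J ∧ u ∈ J), (1-t) * q J := by
      refine Finset.sum_congr rfl fun J hJ => ?_
      simp only [mem_filter] at hJ
      exact hq₂mem J hJ.2.1
    have e2 : ∑ J ∈ univ.filter (fun J => u₀ ∉ J ∧ u ∈ J), q₂ J
        = ∑ J ∈ univ.filter (fun J => u₀ ∉ J ∧ u ∈ J), (q J + t * q (insert u₀ J)) := by
      refine Finset.sum_congr rfl fun J hJ => ?_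
      simp only [mem_filter] at hJ
      exact hq₂nmem J hJ.2.1
    rw [e1, e2, Finset.sum_add_distrib, ← Finset.mul_sum, ← Finset.mul_sum, key2]
    ring
  refine ⟨q₂, ⟨?_, ?_, ?_, ?_⟩, hcoveq, le_of_eq hcovu₀⟩
  · intro J
    by_cases hJ : u₀ ∈ J
    · rw [hq₂mem J hJ]; have := hpos J; nlinarith
    · rw [hq₂nmem J hJ]
      have := hpos J; have := hpos (insert u₀ J); nlinarith
  · intro J hJ
    by_cases hu : u₀ ∈ J
    · rw [hq₂mem J hu] at hJ
      exact hsupp J (fun h => hJ (by rw [h, mul_zero]))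
    · rw [hq₂nmem J hu] at hJ
      by_cases hq0 : q J = 0
      · rw [hq0, zero_add] at hJ
        have : q (insert u₀ J) ≠ 0 := fun h => hJ (by rw [h, mul_zero])
        obtain ⟨hind, hv⟩ := hsupp _ this
        exact ⟨indep_subset hind (Finset.subset_insert _ _),
          fun h => hv (Finset.mem_insert_of_mem h)⟩
      · exact hsupp J hq0
  · rw [hsplit q₂]
    have e1 : ∑ J ∈ univ.filter (fun J => u₀ ∈ J), q₂ J
        = ∑ J ∈ univ.filter (fun J => u₀ ∈ J), (1-t) * q J :=
      Finset.sum_congr rfl fun J hJ => hq₂mem J (by simpa using hJ)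
    have e2 : ∑ J ∈ univ.filter (fun J => u₀ ∉ J), q₂ J
        = ∑ J ∈ univ.filter (fun J => u₀ ∉ J), (q J + t * q (insert u₀ J)) :=
      Finset.sum_congr rfl fun J hJ => hq₂nmem J (by simpa using hJ)
    rw [e1, e2, Finset.sum_add_distrib, ← Finset.mul_sum, ← Finset.mul_sum, key q]
    have := hsplit q
    rw [hsum] at this
    ring_nf
    ring_nf at this
    linarith
  · intro u hu
    by_cases hu0 : u = u₀
    · rw [hu0, hcovu₀]
    · rw [hcoveq u hu0]; exact hcov u hu

/-- shrinking the coverage of every vertex in `S` down to at most `1/r`. -/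
lemma shrinkAll {G : SimpleGraph V} {v : V} {r : ℝ} (hr : 0 < r) {q₀ : Finset V → ℝ}
    (hq₀ : GoodDist G v r q₀) (S : Finset V) :
    ∃ q, GoodDist G v r q ∧ ∀ u ∈ S, cov q u ≤ 1/r := by
  induction S using Finset.induction_on with
  | empty => exact ⟨q₀, hq₀, by simp⟩
  | @insert a S' ha ih =>
    obtain ⟨q, hq, hS⟩ := ih
    obtain ⟨q₂, hq₂, hcoveq, hcova⟩ := shrink hr hq a
    refine ⟨q₂, hq₂, ?_⟩
    intro u hu
    rcases Finset.mem_insert.mp hu with rfl | h'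
    · exact hcova
    · by_cases hua : u = a
      · rw [hua]; exact hcova
      · rw [hcoveq u hua]; exact hS u h'

lemma sum_subtype_bij (v : V) (f : Finset {u : V // u ≠ v} → ℝ)
    (P : Finset V → Prop) [DecidablePred P]
    (Q : Finset {u : V // u ≠ v} → Prop) [DecidablePred Q]
    (hPQ : ∀ I : Finset {u : V // u ≠ v},
      P (I.map (Function.Embedding.subtype _)) ↔ Q I) :
    ∑ J ∈ univ.filter (fun J : Finset V => v ∉ J ∧ P J),
        f (J.subtype (fun u => u ≠ v))
      = ∑ I ∈ univ.filter Q, f I := by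
  have hback : ∀ J : Finset V, v ∉ J →
      (J.subtype (fun u => u ≠ v)).map (Function.Embedding.subtype _) = J := by
    intro J hJ
    rw [Finset.subtype_map]
    exact Finset.filter_true_of_mem fun x hx => fun h => hJ (h ▸ hx)
  have hfwd : ∀ I : Finset {u : V // u ≠ v},
      (I.map (Function.Embedding.subtype _)).subtype (fun u => u ≠ v) = I := by
    intro I
    ext a
    simp only [Finset.mem_subtype, Finset.mem_map, Function.Embedding.coe_subtype]
    constructor
    · rintro ⟨b, hb, hba⟩
      rwa [show b = a from Subtype.ext hba] at hb
    · intro ha; exact ⟨a, ha, rfl⟩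
  have hvmap : ∀ I : Finset {u : V // u ≠ v},
      v ∉ I.map (Function.Embedding.subtype _) := by
    intro I hmem
    rw [Finset.mem_map] at hmem
    obtain ⟨b, _, hb⟩ := hmem
    exact b.2 hb
  refine Finset.sum_nbij' (fun J => J.subtype (fun u => u ≠ v))
    (fun I => I.map (Function.Embedding.subtype _)) ?_ ?_ ?_ ?_ ?_
  · intro J hJ
    simp only [mem_filter, mem_univ, true_and] at hJ ⊢
    rw [← hPQ, hback J hJ.1]
    exact hJ.2
  · intro I hI
    simp only [mem_filter, mem_univ, true_and] at hI ⊢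
    exact ⟨hvmap I, (hPQ I).mpr hI⟩
  · intro J hJ
    simp only [mem_filter, mem_univ, true_and] at hJ
    exact hback J hJ.1
  · intro I _
    exact hfwd I
  · intro J _; rfl

end FracDel

open FracDel in
/-- if `r ≥ d_G(v) + 1` and the vertex-deleted graph `G − v` has a
probability distribution on its independent sets covering every vertex with probability
at least `1/r`, then so does `G`; in particular `χ_f(G) ≤ max{χ_f(G−v), d_G(v)+1}`. -/
theorem fracChromatic_delete_vertex {V : Type*} [Fintype V] [DecidableEq V]
    (G : SimpleGraph V) [DecidableRel G.Adj] (v : V) (r : ℝ)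
    (hr : (G.degree v : ℝ) + 1 ≤ r)
    (h : ∃ p' : Finset {u : V // u ≠ v} → ℝ,
      (∀ I, 0 ≤ p' I) ∧
      (∀ I, p' I ≠ 0 → IsIndepFinset (G.induce {u : V | u ≠ v}) I) ∧
      (∑ I : Finset {u : V // u ≠ v}, p' I) = 1 ∧
      ∀ u : {u : V // u ≠ v},
        1 / r ≤ ∑ I ∈ Finset.univ.filter (fun I : Finset {u : V // u ≠ v} => u ∈ I), p' I) :
    ∃ p : Finset V → ℝ,
      (∀ I, 0 ≤ p I) ∧
      (∀ I, p I ≠ 0 → IsIndepFinset G I) ∧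
      (∑ I : Finset V, p I) = 1 ∧
      ∀ u : V, 1 / r ≤ ∑ I ∈ Finset.univ.filter (fun I : Finset V => u ∈ I), p I := by
  classical
  obtain ⟨p', hp'pos, hp'ind, hp'sum, hp'cov⟩ := h
  have hd0 : (0:ℝ) ≤ (G.degree v : ℝ) := Nat.cast_nonneg _
  have hr0 : (0:ℝ) < r := by linarith
  -- initial distribution on `Finset V`
  set q₀ : Finset V → ℝ :=
    fun J => if v ∈ J then 0 else p' (J.subtype (fun u => u ≠ v)) with hq₀
  have hq₀good : GoodDist G v r q₀ := by
    refine ⟨?_, ?_, ?_, ?_⟩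
    · intro J
      simp only [hq₀]
      split_ifs with hv
      · exact le_refl 0
      · exact hp'pos _
    · intro J hJ
      simp only [hq₀] at hJ
      by_cases hv : v ∈ J
      · rw [if_pos hv] at hJ; exact absurd rfl hJ
      · rw [if_neg hv] at hJ
        refine ⟨?_, hv⟩
        have hind := hp'ind _ hJ
        intro a ha b hb hadj
        have ha' : a ≠ v := fun h => hv (h ▸ ha)
        have hb' : b ≠ v := fun h => hv (h ▸ hb)
        exact hind ⟨a, ha'⟩ (Finset.mem_subtype.mpr ha)
          ⟨b, hb'⟩ (Finset.mem_subtype.mpr hb) hadj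
    · have hzero : ∑ J ∈ univ.filter (fun J : Finset V => v ∈ J), q₀ J = 0 := by
        refine Finset.sum_eq_zero fun J hJ => ?_
        simp only [mem_filter, mem_univ, true_and] at hJ
        simp [hq₀, hJ]
      have hrest : ∑ J ∈ univ.filter (fun J : Finset V => v ∉ J), q₀ J
          = ∑ I : Finset {u : V // u ≠ v}, p' I := by
        have hcongr : ∑ J ∈ univ.filter (fun J : Finset V => v ∉ J), q₀ J
            = ∑ J ∈ univ.filter (fun J : Finset V => v ∉ J ∧ True),
                p' (J.subtype (fun u => u ≠ v)) := by
          rw [show (univ.filter (fun J : Finset V => v ∉ J ∧ True))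
              = univ.filter (fun J : Finset V => v ∉ J) by
            apply Finset.filter_congr; intro J _; tauto]
          refine Finset.sum_congr rfl fun J hJ => ?_
          simp only [mem_filter, mem_univ, true_and] at hJ
          simp [hq₀, hJ]
        rw [hcongr, sum_subtype_bij v p' (fun _ => True) (fun _ => True) (by simp)]
        simp
      rw [← Finset.sum_filter_add_sum_filter_not univ (fun J : Finset V => v ∈ J) q₀,
        hzero, hrest, zero_add, hp'sum]
    · intro u hu
      unfold cov
      have hsub : ∑ J ∈ univ.filter (fun J : Finset V => v ∉ J ∧ u ∈ J), q₀ J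
          = ∑ J ∈ univ.filter (fun J : Finset V => u ∈ J), q₀ J := by
        refine Finset.sum_subset ?_ ?_
        · intro J hJ
          simp only [mem_filter, mem_univ, true_and] at hJ ⊢
          exact hJ.2
        · intro J hJ hJ'
          simp only [mem_filter, mem_univ, true_and] at hJ hJ'
          have hv : v ∈ J := by tauto
          simp [hq₀, hv]
      rw [← hsub]
      have hcongr : ∑ J ∈ univ.filter (fun J : Finset V => v ∉ J ∧ u ∈ J), q₀ J
          = ∑ J ∈ univ.filter (fun J : Finset V => v ∉ J ∧ u ∈ J),
              p' (J.subtype (fun u => u ≠ v)) := by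
        refine Finset.sum_congr rfl fun J hJ => ?_
        simp only [mem_filter, mem_univ, true_and] at hJ
        simp [hq₀, hJ.1]
      rw [hcongr, sum_subtype_bij v p' (fun J => u ∈ J)
        (fun I => ⟨u, hu⟩ ∈ I) ?_]
      · exact hp'cov ⟨u, hu⟩
      · intro I
        simp only [Finset.mem_map, Function.Embedding.coe_subtype]
        constructor
        · rintro ⟨b, hb, hba⟩
          rwa [show b = ⟨u, hu⟩ from Subtype.ext hba] at hb
        · intro hI; exact ⟨⟨u, hu⟩, hI, rfl⟩
  -- shrink the coverage of all neighbours of `v` down to `1/r`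
  obtain ⟨q, hqgood, hqN⟩ := shrinkAll hr0 hq₀good (G.neighborFinset v)
  -- final construction
  obtain ⟨hpos, hsupp, hsum, hcov⟩ := hqgood
  have hr' : (0:ℝ) < 1/r := by positivity
  set N := G.neighborFinset v with hN'
  have hqv : ∀ J, v ∈ J → q J = 0 := by
    intro J hJ
    by_contra h0
    exact (hsupp J h0).2 hJ
  set M : ℝ := ∑ J ∈ univ.filter (fun J => v ∉ J ∧ J ∩ N = ∅), q J with hM
  have hMcompl : M + ∑ J ∈ univ.filter (fun J => ¬(v ∉ J ∧ J ∩ N = ∅)), q J = 1 := by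
    rw [hM, Finset.sum_filter_add_sum_filter_not univ _ q, hsum]
  have swap : ∑ u ∈ N, cov q u = ∑ J : Finset V, ((J ∩ N).card : ℝ) * q J := by
    unfold cov
    have h1 : ∀ u : V, ∑ J ∈ univ.filter (fun J => u ∈ J), q J
        = ∑ J : Finset V, if u ∈ J then q J else 0 := fun u => Finset.sum_filter _ _
    simp_rw [h1]
    rw [Finset.sum_comm]
    refine Finset.sum_congr rfl fun J _ => ?_
    rw [← Finset.sum_filter, Finset.filter_mem_eq_inter, Finset.sum_const,
      nsmul_eq_mul, Finset.inter_comm]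
  have hunion : ∑ J ∈ univ.filter (fun J => ¬(v ∉ J ∧ J ∩ N = ∅)), q J
      ≤ ∑ u ∈ N, cov q u := by
    rw [swap, Finset.sum_filter]
    refine Finset.sum_le_sum fun J _ => ?_
    by_cases h : v ∉ J ∧ J ∩ N = ∅
    · rw [if_neg (not_not_intro h)]
      have := hpos J
      positivity
    · rw [if_pos h]
      by_cases hv : v ∈ J
      · rw [hqv J hv]; simp
      · have hne : J ∩ N ≠ ∅ := by tauto
        have hcard : 1 ≤ ((J ∩ N).card : ℝ) := by
          have := Finset.card_pos.mpr (Finset.nonempty_iff_ne_empty.mpr hne)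
          exact_mod_cast this
        nlinarith [hpos J]
  have hNbound : ∑ u ∈ N, cov q u ≤ (G.degree v : ℝ) * (1/r) := by
    calc ∑ u ∈ N, cov q u ≤ ∑ _u ∈ N, (1/r) := Finset.sum_le_sum hqN
    _ = (N.card : ℝ) * (1/r) := by rw [Finset.sum_const, nsmul_eq_mul]
    _ = _ := by rw [hN', SimpleGraph.card_neighborFinset_eq_degree]
  have hM1 : 1/r ≤ M := by
    have h1 : (G.degree v : ℝ) * (1/r) ≤ 1 - 1/r := by
      rw [mul_one_div, div_le_iff₀ hr0]
      have h2 : (1 - 1/r) * r = r - 1 := by field_simp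
      rw [h2]; linarith
    linarith [hMcompl, hunion, hNbound]
  have hM0 : 0 < M := lt_of_lt_of_le hr' hM1
  set s : ℝ := 1 / (r * M) with hs
  have hs0 : 0 ≤ s := by positivity
  have hs1 : s ≤ 1 := by
    rw [hs, div_le_one (by positivity)]
    calc (1:ℝ) = r * (1/r) := by field_simp
    _ ≤ r * M := mul_le_mul_of_nonneg_left hM1 hr0.le
  have hsM : s * M = 1/r := by
    rw [hs]; field_simp
  set x : Finset V → ℝ := fun J => if v ∉ J ∧ J ∩ N = ∅ then s * q J else 0 with hx
  set y : Finset V → ℝ :=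
    fun J => if v ∈ J ∧ (J.erase v) ∩ N = ∅ then s * q (J.erase v) else 0 with hy
  have hysum : ∑ J, y J = s * M := by
    simp only [hy]
    rw [← Finset.sum_filter]
    have := sum_insert_bij v (fun J => s * q (J.erase v)) (fun J => J ∩ N = ∅)
    rw [← this]
    rw [hM, Finset.mul_sum]
    refine Finset.sum_congr rfl fun J hJ => ?_
    simp only [mem_filter, mem_univ, true_and] at hJ
    rw [Finset.erase_insert hJ.1]
  have hxsum : ∑ J, x J = s * M := by
    simp only [hx]
    rw [← Finset.sum_filter, hM, Finset.mul_sum]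
  refine ⟨fun J => q J - x J + y J, ?_, ?_, ?_, ?_⟩
  · intro J
    show 0 ≤ q J - x J + y J
    by_cases hv : v ∈ J
    · have hx0 : x J = 0 := by simp only [hx]; simp [hv]
      rw [hqv J hv, hx0]
      simp only [hy]
      split_ifs with h
      · have := hpos (J.erase v); positivity
      · norm_num
    · have hy0 : y J = 0 := by simp only [hy]; simp [hv]
      rw [hy0, add_zero]
      simp only [hx]
      split_ifs with h
      · have := hpos J; nlinarith
      · simp [hpos J]
  · intro J hJ0
    replace hJ0 : q J - x J + y J ≠ 0 := hJ0
    by_cases hv : v ∈ J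
    · have hx0 : x J = 0 := by simp only [hx]; simp [hv]
      rw [hqv J hv, hx0] at hJ0
      simp only [sub_zero, zero_add] at hJ0
      simp only [hy] at hJ0
      by_cases h : v ∈ J ∧ (J.erase v) ∩ N = ∅
      · rw [if_pos h] at hJ0
        have hq0 : q (J.erase v) ≠ 0 := by
          intro h0; rw [h0, mul_zero] at hJ0; exact hJ0 rfl
        obtain ⟨hind, -⟩ := hsupp _ hq0
        have hmem : ∀ w ∈ J, w ≠ v → w ∈ J.erase v :=
          fun w hw hwv => Finset.mem_erase.mpr ⟨hwv, hw⟩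
        have hnadj : ∀ w ∈ J.erase v, ¬ G.Adj v w := by
          intro w hw hA
          have hwN : w ∈ (J.erase v) ∩ N := Finset.mem_inter.mpr
            ⟨hw, by rw [hN']; exact (SimpleGraph.mem_neighborFinset G v w).mpr hA⟩
          rw [h.2] at hwN
          exact absurd hwN (Finset.notMem_empty w)
        intro a ha b hb hadj
        by_cases hav : a = v
        · by_cases hbv : b = v
          · rw [hav, hbv] at hadj; exact G.irrefl hadj
          · rw [hav] at hadj; exact hnadj b (hmem b hb hbv) hadj
        · by_cases hbv : b = v
          · rw [hbv] at hadj; exact hnadj a (hmem a ha hav) hadj.symm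
          · exact hind a (hmem a ha hav) b (hmem b hb hbv) hadj
      · rw [if_neg h] at hJ0; exact absurd rfl hJ0
    · have hy0 : y J = 0 := by simp only [hy]; simp [hv]
      rw [hy0, add_zero] at hJ0
      have hq0 : q J ≠ 0 := by
        intro h0
        apply hJ0
        simp only [h0, hx]
        split_ifs with h <;> simp
      exact (hsupp J hq0).1
  · show (∑ J : Finset V, (q J - x J + y J)) = 1
    rw [Finset.sum_add_distrib, Finset.sum_sub_distrib, hsum, hxsum, hysum]; ring
  · intro u
    show 1 / r ≤ ∑ J ∈ Finset.univ.filter (fun J : Finset V => u ∈ J), (q J - x J + y J)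
    by_cases hu : u = v
    · subst hu
      have e1 : ∑ J ∈ univ.filter (fun J => u ∈ J), q J = 0 :=
        Finset.sum_eq_zero fun J hJ => hqv J (by simpa using hJ)
      have e2 : ∑ J ∈ univ.filter (fun J => u ∈ J), x J = 0 := by
        refine Finset.sum_eq_zero fun J hJ => ?_
        simp only [mem_filter, mem_univ, true_and] at hJ
        simp [hx, hJ]
      have e3 : ∑ J ∈ univ.filter (fun J => u ∈ J), y J = ∑ J, y J := by
        refine Finset.sum_subset (Finset.filter_subset _ _) fun J _ hJ => ?_
        simp only [mem_filter, mem_univ, true_and] at hJ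
        simp [hy, hJ]
      rw [Finset.sum_add_distrib, Finset.sum_sub_distrib, e1, e2, e3, hysum, hsM]
      norm_num
    · have eX : ∑ J ∈ univ.filter (fun J => u ∈ J), x J
          = ∑ J ∈ univ.filter (fun J : Finset V => v ∉ J ∧ (u ∈ J ∧ J ∩ N = ∅)), s * q J := by
        simp only [hx]
        rw [Finset.sum_filter, Finset.sum_filter]
        refine Finset.sum_congr rfl fun J _ => ?_
        by_cases h1 : u ∈ J <;> by_cases h2 : v ∉ J ∧ J ∩ N = ∅ <;>
          simp [h1, h2] <;> tauto
      have eY : ∑ J ∈ univ.filter (fun J => u ∈ J), y J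
          = ∑ J ∈ univ.filter (fun J : Finset V => v ∈ J ∧ (u ∈ J.erase v ∧ (J.erase v) ∩ N = ∅)),
              s * q (J.erase v) := by
        simp only [hy]
        rw [Finset.sum_filter, Finset.sum_filter]
        refine Finset.sum_congr rfl fun J _ => ?_
        by_cases h1 : u ∈ J <;>
          by_cases h2 : v ∈ J ∧ (J.erase v) ∩ N = ∅ <;>
          by_cases h3 : v ∈ J <;>
          simp [h1, h2, h3, Finset.mem_erase, hu] <;> tauto
      have eXY : ∑ J ∈ univ.filter (fun J => u ∈ J), x J
          = ∑ J ∈ univ.filter (fun J => u ∈ J), y J := by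
        rw [eX, eY]
        have := sum_insert_bij v (fun J => s * q (J.erase v))
          (fun J => u ∈ J ∧ J ∩ N = ∅)
        rw [← this]
        refine Finset.sum_congr rfl fun J hJ => ?_
        simp only [mem_filter, mem_univ, true_and] at hJ
        rw [Finset.erase_insert hJ.1]
      rw [Finset.sum_add_distrib, Finset.sum_sub_distrib, eXY]
      have hce : ∑ J ∈ univ.filter (fun J => u ∈ J), q J = cov q u := rfl
      rw [hce]
      have := hcov u hu
      linarith
end

section
/- The function f is convex on the interval [0,∞). -/
open MeasureTheory intervalIntegral Set

/-- The Shearer function: `f x = ((1-x) + x·ln x)/(x-1)²` for `x ∈ (0,∞)\{1}`,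
`f 1 = 1/2`, and `f x = 1` for `x ≤ 0`. -/
noncomputable def shearerF (x : ℝ) : ℝ :=
  if x ≤ 0 then 1
  else if x = 1 then 1 / 2
  else ((1 - x) + x * Real.log x) / (x - 1) ^ 2

lemma shearer_denom_pos {x t : ℝ} (hx : 0 < x) (ht0 : 0 ≤ t) (ht1 : t ≤ 1) :
    0 < (1 - t) + t * x := by
  rcases eq_or_lt_of_le ht1 with h | h
  · subst h; simpa using hx
  · nlinarith [mul_nonneg ht0 hx.le]

lemma shearer_integrable {x : ℝ} (hx : 0 ≤ x) :
    IntervalIntegrable (fun t => (1 - t) / ((1 - t) + t * x)) volume 0 1 := by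
  rcases hx.eq_or_lt with h | h
  · -- x = 0 : the integrand equals 1 a.e.
    subst h
    rw [intervalIntegrable_iff_integrableOn_Ioc_of_le zero_le_one]
    have hconst : IntegrableOn (fun _ : ℝ => (1 : ℝ)) (Set.Ioc (0:ℝ) 1) volume := by
      exact integrableOn_const (by simp [Real.volume_Ioc]) (by simp)
    refine hconst.congr_fun_ae ?_
    have h1 : ∀ᵐ t : ℝ ∂volume, t ≠ 1 := by
      rw [MeasureTheory.ae_iff]
      have : {t : ℝ | ¬ t ≠ 1} = {1} := by ext t; simp
      rw [this]; exact Real.volume_singleton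
    filter_upwards [ae_restrict_of_ae h1] with t ht
    have h2 : (1 : ℝ) - t ≠ 0 := sub_ne_zero.2 (fun hh => ht (by linarith))
    simp [div_self h2]
  · exact (ContinuousOn.div (by fun_prop) (by fun_prop)
      (fun t ht => by
        rw [Set.uIcc_of_le zero_le_one] at ht
        exact (shearer_denom_pos h ht.1 ht.2).ne')).intervalIntegrable

lemma shearerF_eq_integral {x : ℝ} (hx : 0 ≤ x) :
    shearerF x = ∫ t in (0:ℝ)..1, (1 - t) / ((1 - t) + t * x) := by
  rcases hx.eq_or_lt with h | hx0
  · -- x = 0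
    subst h
    rw [intervalIntegral.integral_of_le zero_le_one,
      MeasureTheory.integral_Ioc_eq_integral_Ioo,
      MeasureTheory.setIntegral_congr_fun measurableSet_Ioo
        (g := fun _ : ℝ => (1:ℝ)) (fun t ht => by
          have h2 : (1 : ℝ) - t ≠ 0 := sub_ne_zero.2 (fun hh => by
            have := ht.2; linarith)
          simp [div_self h2])]
    simp [shearerF, Real.volume_Ioo]
  rcases eq_or_ne x 1 with h1 | h1
  · -- x = 1
    subst h1
    have heq : ∀ t : ℝ, (1 - t) / ((1 - t) + t * 1) = 1 - t := by
      intro t; norm_num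
    simp_rw [heq]
    rw [intervalIntegral.integral_sub intervalIntegrable_const
      intervalIntegral.intervalIntegrable_id]
    simp [shearerF, integral_id]
    norm_num
  · -- 0 < x, x ≠ 1
    set a : ℝ := x - 1 with ha
    have ha0 : a ≠ 0 := sub_ne_zero.2 h1
    set F : ℝ → ℝ := fun t => -(t / a) + ((a + 1) / a ^ 2) * Real.log (1 + a * t) with hF
    have hpos : ∀ t ∈ Set.uIcc (0:ℝ) 1, 0 < 1 + a * t := by
      intro t ht
      rw [Set.uIcc_of_le zero_le_one] at ht
      have h5 : 1 + a * t = (1 - t) + t * x := by rw [ha]; ring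
      rw [h5]
      exact shearer_denom_pos hx0 ht.1 ht.2
    have hderiv : ∀ t ∈ Set.uIcc (0:ℝ) 1,
        HasDerivAt F ((1 - t) / ((1 - t) + t * x)) t := by
      intro t ht
      have h2 : HasDerivAt (fun t : ℝ => 1 + a * t) a t := by
        simpa using ((hasDerivAt_id t).const_mul a).const_add 1
      have h3 : HasDerivAt (fun t : ℝ => Real.log (1 + a * t)) (a / (1 + a * t)) t := by
        simpa using h2.log (hpos t ht).ne'
      have h4 := (((hasDerivAt_id t).div_const a).neg).add (h3.const_mul ((a + 1) / a ^ 2))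
      convert h4 using 1
      · rfl
      · rfl
      · rfl
      have hne : (1 : ℝ) + a * t ≠ 0 := (hpos t ht).ne'
      have hde : (1 - t) + t * x = 1 + a * t := by rw [ha]; ring
      rw [hde]
      field_simp
      rw [mul_comm t a, div_eq_iff hne, add_mul, div_mul_cancel₀ _ hne]
      ring
    have hint := shearer_integrable hx0.le
    rw [intervalIntegral.integral_eq_sub_of_hasDerivAt hderiv hint]
    have hx1 : (1 : ℝ) + a * 1 = x := by rw [ha]; ring
    have hxne : x ≠ 0 := hx0.ne'
    simp only [hF, hx1, mul_zero, mul_one, Real.log_one]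
    have : shearerF x = ((1 - x) + x * Real.log x) / (x - 1) ^ 2 := by
      simp [shearerF, not_le.2 hx0, h1]
    rw [this, ha]
    field_simp
    rw [show (1:ℝ) + (x - 1) = x by ring, add_zero, Real.log_one]
    ring

lemma shearer_pt_ineq {x y a b t : ℝ} (hx : 0 ≤ x) (hy : 0 ≤ y) (ha : 0 ≤ a)
    (hb : 0 ≤ b) (hab : a + b = 1) (ht0 : 0 ≤ t) (ht1 : t ≤ 1) :
    (1 - t) / ((1 - t) + t * (a * x + b * y)) ≤
      a * ((1 - t) / ((1 - t) + t * x)) + b * ((1 - t) / ((1 - t) + t * y)) := by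
  set c : ℝ := 1 - t with hc
  set p : ℝ := c + t * x with hp
  set q : ℝ := c + t * y with hq
  have hcomb : c + t * (a * x + b * y) = a * p + b * q := by
    rw [hp, hq]; nlinarith [hab]
  rw [hcomb]
  have hcnn : 0 ≤ c := by rw [hc]; linarith
  rcases hcnn.eq_or_lt with h0 | h0
  · rw [← h0]; simp
  · have hpp : 0 < p := by have := mul_nonneg ht0 hx; rw [hp]; linarith
    have hqq : 0 < q := by have := mul_nonneg ht0 hy; rw [hq]; linarith
    have hpq : 0 < a * p + b * q := by
      rw [← hcomb]
      have := mul_nonneg ht0 (add_nonneg (mul_nonneg ha hx) (mul_nonneg hb hy))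
      linarith
    have hrhs : a * (c / p) + b * (c / q) = (a * c * q + b * c * p) / (p * q) := by
      field_simp
    rw [hrhs, div_le_div_iff₀ hpq (mul_pos hpp hqq)]
    have hid : (a * c * q + b * c * p) * (a * p + b * q) - c * (p * q)
        = c * (a * b) * (p - q) ^ 2 := by
      linear_combination (c * p * q * (a + b + 1)) * hab
    have hnn : 0 ≤ c * (a * b) * (p - q) ^ 2 :=
      mul_nonneg (mul_nonneg h0.le (mul_nonneg ha hb)) (sq_nonneg _)
    linarith

/-- the function `f` is convex on `[0,∞)`. -/
theorem shearerF_convexOn : ConvexOn ℝ (Set.Ici (0 : ℝ)) shearerF := by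
  refine ⟨convex_Ici 0, fun x hx y hy a b ha hb hab => ?_⟩
  simp only [smul_eq_mul]
  have hx' : (0:ℝ) ≤ x := hx
  have hy' : (0:ℝ) ≤ y := hy
  have hxy : (0:ℝ) ≤ a * x + b * y := add_nonneg (mul_nonneg ha hx') (mul_nonneg hb hy')
  rw [shearerF_eq_integral hx', shearerF_eq_integral hy', shearerF_eq_integral hxy]
  have I1 := shearer_integrable hx'
  have I2 := shearer_integrable hy'
  have I3 := shearer_integrable hxy
  calc (∫ t in (0:ℝ)..1, (1 - t) / ((1 - t) + t * (a * x + b * y)))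
      ≤ ∫ t in (0:ℝ)..1, (a * ((1 - t) / ((1 - t) + t * x))
          + b * ((1 - t) / ((1 - t) + t * y))) := by
        apply intervalIntegral.integral_mono_on zero_le_one I3
          ((I1.const_mul a).add (I2.const_mul b))
        intro t ht
        exact shearer_pt_ineq hx' hy' ha hb hab ht.1 ht.2
    _ = a * (∫ t in (0:ℝ)..1, (1 - t) / ((1 - t) + t * x))
        + b * (∫ t in (0:ℝ)..1, (1 - t) / ((1 - t) + t * y)) := by
        rw [intervalIntegral.integral_add (I1.const_mul a) (I2.const_mul b),
          intervalIntegral.integral_const_mul, intervalIntegral.integral_const_mul]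
end

section
/- The function f is strictly monotonically decreasing on the interval [0,∞): for all real numbers x, y with 0 ≤ x < y one has f(y) < f(x). -/
open Real Set

noncomputable def shearerG (x : ℝ) : ℝ := ((1 - x) + x * Real.log x) / (x - 1) ^ 2

lemma shearerF_eq {x : ℝ} (hx : 0 < x) (hx1 : x ≠ 1) : shearerF x = shearerG x := by
  simp [shearerF, shearerG, not_le.mpr hx, hx1]

lemma shearerF_one : shearerF 1 = 1 / 2 := by norm_num [shearerF]

lemma shearerF_zero : shearerF 0 = 1 := by norm_num [shearerF]

lemma hasDerivAt_xlog {x : ℝ} (hx : 0 < x) :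
    HasDerivAt (fun x : ℝ => x * Real.log x) (Real.log x + 1) x := by
  have := (hasDerivAt_id x).mul (Real.hasDerivAt_log hx.ne')
  refine this.congr_deriv ?_
  field_simp
  simp only [id_eq]
  ring

/-- ψ x = x log x - (x^2-1)/2 -/
noncomputable def psi (x : ℝ) : ℝ := x * Real.log x - (x ^ 2 - 1) / 2

lemma hasDerivAt_psi {x : ℝ} (hx : 0 < x) :
    HasDerivAt psi (Real.log x + 1 - x) x := by
  have h2 : HasDerivAt (fun x : ℝ => (x ^ 2 - 1) / 2) x x := by
    have := (((hasDerivAt_id x).pow 2).sub_const 1).div_const 2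
    refine this.congr_deriv ?_
    simp only [id_eq, pow_one]
    push_cast
    ring
  exact (hasDerivAt_xlog hx).sub h2

lemma psi_pos {x : ℝ} (hx : 0 < x) (hx1 : x < 1) : 0 < psi x := by
  have h : StrictAntiOn psi (Ioc 0 1) := by
    apply strictAntiOn_of_deriv_neg (convex_Ioc 0 1)
    · intro z hz
      exact (hasDerivAt_psi hz.1).continuousAt.continuousWithinAt
    · intro z hz
      rw [interior_Ioc] at hz
      rw [(hasDerivAt_psi hz.1).deriv]
      have := Real.log_lt_sub_one_of_pos hz.1 (ne_of_lt hz.2)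
      linarith
  have := h ⟨hx, hx1.le⟩ ⟨zero_lt_one, le_refl 1⟩ hx1
  simpa [psi] using this

lemma psi_neg {x : ℝ} (hx1 : 1 < x) : psi x < 0 := by
  have h : StrictAntiOn psi (Ici 1) := by
    apply strictAntiOn_of_deriv_neg (convex_Ici 1)
    · intro z hz
      exact (hasDerivAt_psi (lt_of_lt_of_le zero_lt_one hz)).continuousAt.continuousWithinAt
    · intro z hz
      rw [interior_Ici] at hz
      rw [(hasDerivAt_psi (lt_trans zero_lt_one hz)).deriv]
      have := Real.log_lt_sub_one_of_pos (lt_trans zero_lt_one hz) (ne_of_gt hz)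
      linarith
  have := h (self_mem_Ici) (le_of_lt hx1) hx1
  simpa [psi] using this

/-- φ x = (x+1) log x - 2(x-1) -/
noncomputable def phi (x : ℝ) : ℝ := (x + 1) * Real.log x - 2 * (x - 1)

lemma hasDerivAt_phi {x : ℝ} (hx : 0 < x) :
    HasDerivAt phi (Real.log x + 1 / x - 1) x := by
  have h1 : HasDerivAt (fun x : ℝ => (x + 1) * Real.log x)
      (1 * Real.log x + (x + 1) * x⁻¹) x :=
    ((hasDerivAt_id x).add_const 1).mul (Real.hasDerivAt_log hx.ne')
  have h2 : HasDerivAt (fun x : ℝ => 2 * (x - 1)) 2 x := by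
    simpa using ((hasDerivAt_id x).sub_const 1).const_mul 2
  have := h1.sub h2
  refine this.congr_deriv ?_
  field_simp
  ring

lemma phi_deriv_pos {x : ℝ} (hx : 0 < x) (hx1 : x ≠ 1) :
    0 < Real.log x + 1 / x - 1 := by
  have hinv : Real.log (1 / x) < 1 / x - 1 := by
    apply Real.log_lt_sub_one_of_pos (by positivity)
    intro h
    apply hx1
    field_simp at h
    linarith
  rw [Real.log_div one_ne_zero hx.ne', Real.log_one] at hinv
  linarith

lemma phi_neg {x : ℝ} (hx : 0 < x) (hx1 : x < 1) : phi x < 0 := by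
  have h : StrictMonoOn phi (Ioc 0 1) := by
    apply strictMonoOn_of_deriv_pos (convex_Ioc 0 1)
    · intro z hz
      exact (hasDerivAt_phi hz.1).continuousAt.continuousWithinAt
    · intro z hz
      rw [interior_Ioc] at hz
      rw [(hasDerivAt_phi hz.1).deriv]
      exact phi_deriv_pos hz.1 (ne_of_lt hz.2)
  have := h ⟨hx, hx1.le⟩ ⟨zero_lt_one, le_refl 1⟩ hx1
  simpa [phi] using this

lemma phi_pos {x : ℝ} (hx1 : 1 < x) : 0 < phi x := by
  have h : StrictMonoOn phi (Ici 1) := by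
    apply strictMonoOn_of_deriv_pos (convex_Ici 1)
    · intro z hz
      exact (hasDerivAt_phi (lt_of_lt_of_le zero_lt_one hz)).continuousAt.continuousWithinAt
    · intro z hz
      rw [interior_Ici] at hz
      rw [(hasDerivAt_phi (lt_trans zero_lt_one hz)).deriv]
      exact phi_deriv_pos (lt_trans zero_lt_one hz) (ne_of_gt hz)
  have := h (self_mem_Ici) (le_of_lt hx1) hx1
  simpa [phi] using this

lemma hasDerivAt_shearerG {x : ℝ} (hx : 0 < x) (hx1 : x ≠ 1) :
    HasDerivAt shearerG ((2 * (x - 1) - (x + 1) * Real.log x) / (x - 1) ^ 3) x := by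
  have h1 : x - 1 ≠ 0 := sub_ne_zero.mpr hx1
  have hN : HasDerivAt (fun x : ℝ => (1 - x) + x * Real.log x) (Real.log x) x := by
    have ha : HasDerivAt (fun x : ℝ => 1 - x) (-1) x := by
      simpa using (hasDerivAt_id x).const_sub 1
    exact (ha.add (hasDerivAt_xlog hx)).congr_deriv (by ring)
  have hD : HasDerivAt (fun x : ℝ => (x - 1) ^ 2) (2 * (x - 1)) x := by
    have := ((hasDerivAt_id x).sub_const 1).pow 2
    refine this.congr_deriv ?_
    simp only [id_eq, pow_one]
    push_cast
    ring
  have := hN.div hD (pow_ne_zero 2 h1)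
  refine this.congr_deriv ?_
  field_simp
  ring

lemma deriv_shearerG_neg {x : ℝ} (hx : 0 < x) (hx1 : x ≠ 1) :
    deriv shearerG x < 0 := by
  rw [(hasDerivAt_shearerG hx hx1).deriv]
  have key : 2 * (x - 1) - (x + 1) * Real.log x = -phi x := by simp [phi]
  rw [key]
  rcases lt_or_gt_of_ne hx1 with h | h
  · apply div_neg_of_pos_of_neg
    · linarith [phi_neg hx h]
    · have h2 : x - 1 < 0 := by linarith
      exact Odd.pow_neg ⟨1, by norm_num⟩ h2
  · apply div_neg_of_neg_of_pos
    · linarith [phi_pos h]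
    · exact pow_pos (by linarith) 3

lemma shearerG_anti_Ioo : StrictAntiOn shearerG (Ioo 0 1) := by
  apply strictAntiOn_of_deriv_neg (convex_Ioo 0 1)
  · intro z hz
    exact (hasDerivAt_shearerG hz.1 (ne_of_lt hz.2)).continuousAt.continuousWithinAt
  · intro z hz
    rw [interior_Ioo] at hz
    exact deriv_shearerG_neg hz.1 (ne_of_lt hz.2)

lemma shearerG_anti_Ioi : StrictAntiOn shearerG (Ioi 1) := by
  apply strictAntiOn_of_deriv_neg (convex_Ioi 1)
  · intro z hz
    exact (hasDerivAt_shearerG (lt_trans zero_lt_one hz) (ne_of_gt hz)).continuousAt.continuousWithinAt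
  · intro z hz
    rw [interior_Ioi] at hz
    exact deriv_shearerG_neg (lt_trans zero_lt_one hz) (ne_of_gt hz)

lemma shearerG_lt_one {x : ℝ} (hx : 0 < x) (hx1 : x ≠ 1) : shearerG x < 1 := by
  have h1 : (0:ℝ) < (x - 1) ^ 2 := by
    have : x - 1 ≠ 0 := sub_ne_zero.mpr hx1
    positivity
  rw [shearerG, div_lt_one h1]
  have := Real.log_lt_sub_one_of_pos hx hx1
  nlinarith [mul_lt_mul_of_pos_left this hx]

lemma shearerG_gt_half {x : ℝ} (hx : 0 < x) (hx1 : x < 1) : 1 / 2 < shearerG x := by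
  have h1 : (0:ℝ) < (x - 1) ^ 2 := by nlinarith
  rw [shearerG, lt_div_iff₀ h1]
  have := psi_pos hx hx1
  simp only [psi] at this
  nlinarith

lemma shearerG_lt_half {x : ℝ} (hx1 : 1 < x) : shearerG x < 1 / 2 := by
  have h1 : (0:ℝ) < (x - 1) ^ 2 := by nlinarith
  rw [shearerG, div_lt_iff₀ h1]
  have := psi_neg hx1
  simp only [psi] at this
  nlinarith

/-- the function `f` is strictly decreasing on `[0,∞)`. -/
theorem shearerF_strictAntiOn :
    ∀ x y : ℝ, 0 ≤ x → x < y → shearerF y < shearerF x := by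
  intro x y hx hxy
  rcases eq_or_lt_of_le hx with h0 | h0
  · -- x = 0
    subst h0
    rw [shearerF_zero]
    rcases eq_or_ne y 1 with hy1 | hy1
    · rw [hy1, shearerF_one]; norm_num
    · rw [shearerF_eq hxy hy1]
      exact shearerG_lt_one hxy hy1
  · have hy : 0 < y := lt_trans h0 hxy
    rcases lt_trichotomy x 1 with hx1 | hx1 | hx1
    · rcases lt_trichotomy y 1 with hy1 | hy1 | hy1
      · rw [shearerF_eq h0 (ne_of_lt hx1), shearerF_eq hy (ne_of_lt hy1)]
        exact shearerG_anti_Ioo ⟨h0, hx1⟩ ⟨hy, hy1⟩ hxy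
      · rw [hy1, shearerF_one, shearerF_eq h0 (ne_of_lt hx1)]
        exact shearerG_gt_half h0 hx1
      · rw [shearerF_eq h0 (ne_of_lt hx1), shearerF_eq hy (ne_of_gt hy1)]
        calc shearerG y < 1 / 2 := shearerG_lt_half hy1
          _ < shearerG x := shearerG_gt_half h0 hx1
    · subst hx1
      have hy1 : 1 < y := hxy
      rw [shearerF_one, shearerF_eq hy (ne_of_gt hy1)]
      exact shearerG_lt_half hy1
    · have hy1 : 1 < y := lt_trans hx1 hxy
      rw [shearerF_eq h0 (ne_of_gt hx1), shearerF_eq hy (ne_of_gt hy1)]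
      exact shearerG_anti_Ioi hx1 hy1 hxy
end

section
/- For every real number x > 0, the derivative of the function f satisfies |x·f'(x)| < 1. -/
open Real Filter Set

noncomputable def auxG (x : ℝ) : ℝ := (x-1)^3 + 2*x*(x-1) - x*(x+1)*Real.log x
noncomputable def auxG1 (x : ℝ) : ℝ := 3*(x-1)^2 + 3*x - 3 - (2*x+1)*Real.log x
noncomputable def auxG2 (x : ℝ) : ℝ := 6*x - 5 - 2*Real.log x - 1/x
noncomputable def auxH (x : ℝ) : ℝ := (x+1)*Real.log x - 2*(x-1)

lemma hasDerivAt_auxG {x : ℝ} (hx : 0 < x) : HasDerivAt auxG (auxG1 x) x := by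
  have hlog := Real.hasDerivAt_log (ne_of_gt hx)
  have ha : HasDerivAt (fun y : ℝ => (y-1)^3) (3*(x-1)^2) x := by
    have := (((hasDerivAt_id x).sub_const 1).pow 3)
    simp only [id_eq, Pi.add_def, Pi.sub_def, Pi.mul_def, Pi.pow_def] at this ⊢; exact this.congr_deriv (by ring)
  have hb : HasDerivAt (fun y : ℝ => 2*y*(y-1)) (4*x - 2) x := by
    have := ((hasDerivAt_id x).const_mul 2).mul ((hasDerivAt_id x).sub_const 1)
    simp only [id_eq, Pi.add_def, Pi.sub_def, Pi.mul_def, Pi.pow_def] at this ⊢; exact this.congr_deriv (by ring)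
  have hc : HasDerivAt (fun y : ℝ => y*(y+1)*Real.log y)
      ((2*x+1) * Real.log x + (x+1)) x := by
    have h1 : HasDerivAt (fun y : ℝ => y*(y+1)) (2*x+1) x := by
      have := (hasDerivAt_id x).mul ((hasDerivAt_id x).add_const 1)
      simp only [id_eq, Pi.add_def, Pi.sub_def, Pi.mul_def, Pi.pow_def] at this ⊢; exact this.congr_deriv (by ring)
    have := h1.mul hlog
    simp only [id_eq, Pi.add_def, Pi.sub_def, Pi.mul_def, Pi.pow_def] at this ⊢; refine this.congr_deriv ?_
    field_simp
  have h := (ha.add hb).sub hc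
  have h2 : HasDerivAt auxG (3*(x-1)^2 + (4*x-2) - ((2*x+1) * Real.log x + (x+1))) x :=
    h.congr_of_eventuallyEq (by filter_upwards with y; unfold auxG; simp only [Pi.add_apply, Pi.sub_apply])
  convert h2 using 1; unfold auxG1; ring

lemma hasDerivAt_auxG1 {x : ℝ} (hx : 0 < x) : HasDerivAt auxG1 (auxG2 x) x := by
  have hlog := Real.hasDerivAt_log (ne_of_gt hx)
  have ha : HasDerivAt (fun y : ℝ => 3*(y-1)^2) (6*(x-1)) x := by
    have := (((hasDerivAt_id x).sub_const 1).pow 2).const_mul 3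
    simp only [id_eq, Pi.add_def, Pi.sub_def, Pi.mul_def, Pi.pow_def] at this ⊢; exact this.congr_deriv (by ring)
  have hb : HasDerivAt (fun y : ℝ => 3*y - 3) 3 x := by
    simpa using ((hasDerivAt_id x).const_mul 3).sub_const 3
  have hc : HasDerivAt (fun y : ℝ => (2*y+1)*Real.log y)
      (2*Real.log x + (2*x+1)/x) x := by
    have h1 : HasDerivAt (fun y : ℝ => 2*y+1) 2 x := by
      simpa using ((hasDerivAt_id x).const_mul 2).add_const 1
    have := h1.mul hlog
    simp only [id_eq, Pi.add_def, Pi.sub_def, Pi.mul_def, Pi.pow_def] at this ⊢; exact this.congr_deriv (by ring)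
  have h := (ha.add hb).sub hc
  have h2 : HasDerivAt auxG1 (6*(x-1) + 3 - (2*Real.log x + (2*x+1)/x)) x :=
    h.congr_of_eventuallyEq (by filter_upwards with y; unfold auxG1; simp only [Pi.add_apply, Pi.sub_apply]; ring)
  convert h2 using 1; unfold auxG2; field_simp; ring

lemma hasDerivAt_auxG2 {x : ℝ} (hx : 0 < x) : HasDerivAt auxG2 (6 - 2/x + 1/x^2) x := by
  have hlog := Real.hasDerivAt_log (ne_of_gt hx)
  have ha : HasDerivAt (fun y : ℝ => 6*y - 5) 6 x := by
    simpa using ((hasDerivAt_id x).const_mul 6).sub_const 5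
  have hinv : HasDerivAt (fun y : ℝ => 1/y) (-(x^2)⁻¹) x := by
    simpa using (hasDerivAt_inv (ne_of_gt hx))
  have h := (ha.sub (hlog.const_mul 2)).sub hinv
  have h2 : HasDerivAt auxG2 (6 - 2*x⁻¹ - -(x^2)⁻¹) x :=
    h.congr_of_eventuallyEq (by filter_upwards with y; unfold auxG2; simp only [Pi.add_apply, Pi.sub_apply])
  convert h2 using 1; field_simp; ring

lemma hasDerivAt_auxH {x : ℝ} (hx : 0 < x) :
    HasDerivAt auxH (Real.log x + 1/x - 1) x := by
  have hlog := Real.hasDerivAt_log (ne_of_gt hx)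
  have h1 : HasDerivAt (fun y : ℝ => (y+1)*Real.log y) (Real.log x + (x+1)*x⁻¹) x := by
    have := (((hasDerivAt_id x).add_const 1)).mul hlog
    simp only [id_eq, Pi.add_def, Pi.sub_def, Pi.mul_def, Pi.pow_def] at this ⊢; exact this.congr_deriv (by ring)
  have h2 : HasDerivAt (fun y : ℝ => 2*(y-1)) 2 x := by
    simpa using (((hasDerivAt_id x).sub_const 1).const_mul 2)
  have h := h1.sub h2
  have h3 : HasDerivAt auxH (Real.log x + (x+1)*x⁻¹ - 2) x :=
    h.congr_of_eventuallyEq (by filter_upwards with y; unfold auxH; simp only [Pi.add_apply, Pi.sub_apply])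
  convert h3 using 1; field_simp; ring

lemma auxG2_pos {x : ℝ} (hx : 1 < x) : 0 < auxG2 x := by
  have hmono : StrictMonoOn auxG2 (Ici 1) := by
    apply strictMonoOn_of_deriv_pos (convex_Ici 1)
    · intro y hy
      exact (hasDerivAt_auxG2 (lt_of_lt_of_le one_pos hy)).continuousAt.continuousWithinAt
    · intro y hy
      rw [interior_Ici] at hy
      have hy0 : (0:ℝ) < y := lt_trans one_pos hy
      rw [(hasDerivAt_auxG2 hy0).deriv]
      have h1 : (0:ℝ) < 6*y^2 - 2*y + 1 := by nlinarith [sq_nonneg (y - 1/6)]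
      have : 6 - 2/y + 1/y^2 = (6*y^2 - 2*y + 1)/y^2 := by field_simp
      rw [this]
      positivity
  have := hmono (self_mem_Ici) (le_of_lt hx) hx
  norm_num [auxG2] at this ⊢; linarith

lemma auxG2_neg {x : ℝ} (hx0 : 0 < x) (hx : x < 1) : auxG2 x < 0 := by
  have hmono : StrictMonoOn auxG2 (Icc x 1) := by
    apply strictMonoOn_of_deriv_pos (convex_Icc x 1)
    · intro y hy
      exact (hasDerivAt_auxG2 (lt_of_lt_of_le hx0 hy.1)).continuousAt.continuousWithinAt
    · intro y hy
      rw [interior_Icc] at hy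
      have hy0 : (0:ℝ) < y := lt_trans hx0 hy.1
      rw [(hasDerivAt_auxG2 hy0).deriv]
      have h1 : (0:ℝ) < 6*y^2 - 2*y + 1 := by nlinarith [sq_nonneg (y - 1/6)]
      have : 6 - 2/y + 1/y^2 = (6*y^2 - 2*y + 1)/y^2 := by field_simp
      rw [this]
      positivity
  have := hmono (left_mem_Icc.2 (le_of_lt hx)) (right_mem_Icc.2 (le_of_lt hx)) hx
  norm_num [auxG2] at this ⊢; linarith

lemma auxG1_pos {x : ℝ} (hx0 : 0 < x) (hx : x ≠ 1) : 0 < auxG1 x := by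
  rcases lt_or_gt_of_ne hx with h | h
  · -- x < 1 : G1 strictly anti on [x,1]
    have hmono : StrictAntiOn auxG1 (Icc x 1) := by
      apply strictAntiOn_of_deriv_neg (convex_Icc x 1)
      · intro y hy
        exact (hasDerivAt_auxG1 (lt_of_lt_of_le hx0 hy.1)).continuousAt.continuousWithinAt
      · intro y hy
        rw [interior_Icc] at hy
        rw [(hasDerivAt_auxG1 (lt_trans hx0 hy.1)).deriv]
        exact auxG2_neg (lt_trans hx0 hy.1) hy.2
    have := hmono (left_mem_Icc.2 (le_of_lt h)) (right_mem_Icc.2 (le_of_lt h)) h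
    simpa [auxG1, Real.log_one] using this
  · have hmono : StrictMonoOn auxG1 (Ici 1) := by
      apply strictMonoOn_of_deriv_pos (convex_Ici 1)
      · intro y hy
        exact (hasDerivAt_auxG1 (lt_of_lt_of_le one_pos hy)).continuousAt.continuousWithinAt
      · intro y hy
        rw [interior_Ici] at hy
        rw [(hasDerivAt_auxG1 (lt_trans one_pos hy)).deriv]
        exact auxG2_pos hy
    have := hmono self_mem_Ici (le_of_lt h) h
    simpa [auxG1, Real.log_one] using this

lemma auxG_pos {x : ℝ} (hx : 1 < x) : 0 < auxG x := by
  have hmono : StrictMonoOn auxG (Ici 1) := by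
    apply strictMonoOn_of_deriv_pos (convex_Ici 1)
    · intro y hy
      exact (hasDerivAt_auxG (lt_of_lt_of_le one_pos hy)).continuousAt.continuousWithinAt
    · intro y hy
      rw [interior_Ici] at hy
      rw [(hasDerivAt_auxG (lt_trans one_pos hy)).deriv]
      exact auxG1_pos (lt_trans one_pos hy) (ne_of_gt hy)
  have := hmono self_mem_Ici (le_of_lt hx) hx
  simpa [auxG, Real.log_one] using this

lemma auxG_neg {x : ℝ} (hx0 : 0 < x) (hx : x < 1) : auxG x < 0 := by
  have hmono : StrictMonoOn auxG (Icc x 1) := by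
    apply strictMonoOn_of_deriv_pos (convex_Icc x 1)
    · intro y hy
      exact (hasDerivAt_auxG (lt_of_lt_of_le hx0 hy.1)).continuousAt.continuousWithinAt
    · intro y hy
      rw [interior_Icc] at hy
      exact (hasDerivAt_auxG (lt_trans hx0 hy.1)).deriv ▸
        auxG1_pos (lt_trans hx0 hy.1) (ne_of_lt hy.2)
  have := hmono (left_mem_Icc.2 (le_of_lt hx)) (right_mem_Icc.2 (le_of_lt hx)) hx
  simpa [auxG, Real.log_one] using this

lemma auxH_deriv_nonneg {x : ℝ} (hx : 0 < x) : 0 ≤ Real.log x + 1/x - 1 := by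
  have h := Real.log_le_sub_one_of_pos (show (0:ℝ) < 1/x by positivity)
  rw [Real.log_div one_ne_zero (ne_of_gt hx), Real.log_one] at h
  linarith

lemma auxH_nonneg {x : ℝ} (hx : 1 ≤ x) : 0 ≤ auxH x := by
  have hmono : MonotoneOn auxH (Ici 1) := by
    apply monotoneOn_of_deriv_nonneg (convex_Ici 1)
    · intro y hy
      exact (hasDerivAt_auxH (lt_of_lt_of_le one_pos hy)).continuousAt.continuousWithinAt
    · intro y hy
      rw [interior_Ici] at hy
      exact (hasDerivAt_auxH (lt_trans one_pos hy)).differentiableAt.differentiableWithinAt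
    · intro y hy
      rw [interior_Ici] at hy
      rw [(hasDerivAt_auxH (lt_trans one_pos hy)).deriv]
      exact auxH_deriv_nonneg (lt_trans one_pos hy)
  have := hmono self_mem_Ici hx hx
  simpa [auxH, Real.log_one] using this

lemma auxH_nonpos {x : ℝ} (hx0 : 0 < x) (hx : x ≤ 1) : auxH x ≤ 0 := by
  have hmono : MonotoneOn auxH (Icc x 1) := by
    apply monotoneOn_of_deriv_nonneg (convex_Icc x 1)
    · intro y hy
      exact (hasDerivAt_auxH (lt_of_lt_of_le hx0 hy.1)).continuousAt.continuousWithinAt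
    · intro y hy
      rw [interior_Icc] at hy
      exact (hasDerivAt_auxH (lt_trans hx0 hy.1)).differentiableAt.differentiableWithinAt
    · intro y hy
      rw [interior_Icc] at hy
      rw [(hasDerivAt_auxH (lt_trans hx0 hy.1)).deriv]
      exact auxH_deriv_nonneg (lt_trans hx0 hy.1)
  have := hmono (left_mem_Icc.2 hx) (right_mem_Icc.2 hx) hx
  simpa [auxH, Real.log_one] using this


lemma shearerF_eventuallyEq {x : ℝ} (hx0 : 0 < x) (hx1 : x ≠ 1) :
    shearerF =ᶠ[nhds x] fun y => ((1 - y) + y * Real.log y) / (y - 1)^2 := by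
  have hmem : Set.Ioi (0:ℝ) ∩ {(1:ℝ)}ᶜ ∈ nhds x :=
    (isOpen_Ioi.inter isOpen_compl_singleton).mem_nhds ⟨hx0, hx1⟩
  filter_upwards [hmem] with y hy
  have hy1 : y ≠ 1 := hy.2
  have hy0 : (0:ℝ) < y := hy.1
  show shearerF y = _
  unfold shearerF
  rw [if_neg (not_le.mpr hy0), if_neg hy1]

lemma hasDerivAt_shearerF {x : ℝ} (hx0 : 0 < x) (hx1 : x ≠ 1) :
    HasDerivAt shearerF ((2*(x-1) - (x+1)*Real.log x)/(x-1)^3) x := by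
  have ht : x - 1 ≠ 0 := sub_ne_zero.2 hx1
  have hlog := Real.hasDerivAt_log (ne_of_gt hx0)
  have hN : HasDerivAt (fun y : ℝ => (1 - y) + y * Real.log y) (Real.log x) x := by
    have h1 : HasDerivAt (fun y : ℝ => (1:ℝ) - y) (-1) x := by
      simpa using (hasDerivAt_id x).const_sub 1
    have h2 : HasDerivAt (fun y : ℝ => y * Real.log y) (Real.log x + 1) x := by
      have := (hasDerivAt_id x).mul hlog
      simp only [id_eq, Pi.add_def, Pi.sub_def, Pi.mul_def, Pi.pow_def] at this ⊢; refine this.congr_deriv ?_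
      field_simp
    have := h1.add h2
    exact this.congr_deriv (by ring)
  have hD : HasDerivAt (fun y : ℝ => (y - 1)^2) (2*(x-1)) x := by
    have := ((hasDerivAt_id x).sub_const 1).pow 2
    simp only [id_eq, Pi.add_def, Pi.sub_def, Pi.mul_def, Pi.pow_def] at this ⊢; exact this.congr_deriv (by ring)
  have hq := hN.div hD (pow_ne_zero 2 ht)
  have hq' : HasDerivAt (fun y => ((1 - y) + y * Real.log y) / (y - 1)^2)
      ((2*(x-1) - (x+1)*Real.log x)/(x-1)^3) x := by
    refine hq.congr_deriv ?_
    field_simp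
    ring
  exact hq'.congr_of_eventuallyEq (shearerF_eventuallyEq hx0 hx1)

lemma main_ne_one {x : ℝ} (hx0 : 0 < x) (hx1 : x ≠ 1) :
    |x * deriv shearerF x| < 1 := by
  rw [(hasDerivAt_shearerF hx0 hx1).deriv]
  have ht : x - 1 ≠ 0 := sub_ne_zero.2 hx1
  set L := Real.log x with hL
  have heq : x * ((2*(x-1) - (x+1)*L)/(x-1)^3)
      = (x * (2*(x-1) - (x+1)*L)) / (x-1)^3 := by ring
  rw [heq, abs_div, div_lt_one (abs_pos.2 (pow_ne_zero 3 ht)), abs_lt]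
  rcases lt_or_gt_of_ne hx1 with h | h
  · -- x < 1
    have hG := auxG_neg hx0 h
    have hH := auxH_nonpos hx0 (le_of_lt h)
    unfold auxG at hG
    unfold auxH at hH
    have habs : |(x-1)^3| = -((x-1)^3) := by
      rw [abs_of_nonpos]; nlinarith
    rw [habs]
    constructor
    · nlinarith
    · nlinarith
  · -- x > 1
    have hG := auxG_pos h
    have hH := auxH_nonneg (le_of_lt h)
    unfold auxG at hG
    unfold auxH at hH
    have habs : |(x-1)^3| = (x-1)^3 := by
      rw [abs_of_nonneg]; nlinarith
    rw [habs]
    constructor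
    · nlinarith
    · nlinarith

lemma log_taylor_bound {t : ℝ} (ht : |t| < 1/2) :
    |Real.log (1 + t) - (t - t^2/2 + t^3/3)| ≤ 2 * |t|^4 := by
  have h1 : |(-t)| < 1 := by rw [abs_neg]; linarith
  have h := Real.abs_log_sub_add_sum_range_le h1 3
  have hsum : (∑ i ∈ Finset.range 3, (-t) ^ (i + 1) / (↑i + 1)) = -t + t^2/2 - t^3/3 := by
    simp [Finset.sum_range_succ]
    ring
  rw [hsum] at h
  have h2 : (1 : ℝ) - -t = 1 + t := by ring
  rw [h2] at h
  have h3 : |Real.log (1 + t) - (t - t^2/2 + t^3/3)|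
      = |(-t + t^2/2 - t^3/3) + Real.log (1+t)| := by
    rw [show (-t + t^2/2 - t^3/3) + Real.log (1+t)
        = Real.log (1 + t) - (t - t^2/2 + t^3/3) by ring]
  rw [h3]
  refine h.trans ?_
  rw [abs_neg] at h1 ⊢
  have h4 : (1:ℝ)/2 ≤ 1 - |t| := by linarith
  have h5 : |t|^(3+1) / (1 - |t|) ≤ |t|^(3+1) / (1/2) := by
    apply div_le_div_of_nonneg_left (by positivity) (by norm_num) h4
  refine h5.trans ?_
  rw [div_div_eq_mul_div]
  norm_num
  ring_nf
  rfl

lemma hasDerivAt_shearerF_one : HasDerivAt shearerF (-(1/6)) 1 := by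
  rw [hasDerivAt_iff_tendsto_slope]
  have key : Filter.Tendsto (fun x : ℝ => slope shearerF 1 x - (-(1/6)))
      (nhdsWithin 1 {(1:ℝ)}ᶜ) (nhds 0) := by
    apply squeeze_zero_norm' (a := fun x : ℝ => 4 * |x - 1|)
    · have hIoo : Set.Ioo (1/2 : ℝ) (3/2) ∈ nhdsWithin 1 {(1:ℝ)}ᶜ :=
        nhdsWithin_le_nhds (Ioo_mem_nhds (by norm_num) (by norm_num))
      filter_upwards [hIoo, self_mem_nhdsWithin] with x hx hx1
      have hx1' : x ≠ 1 := hx1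
      have hx0 : (0:ℝ) < x := by linarith [hx.1]
      set t : ℝ := x - 1 with htdef
      have ht0 : t ≠ 0 := sub_ne_zero.2 hx1'
      have htabs : |t| < 1/2 := by
        rw [abs_lt]; constructor <;> [linarith [hx.1]; linarith [hx.2]]
      set E : ℝ := Real.log x - (t - t^2/2 + t^3/3) with hEdef
      have hE : |E| ≤ 2 * |t|^4 := by
        have : (1:ℝ) + t = x := by ring
        have h := log_taylor_bound htabs
        rwa [this] at h
      have hsf : shearerF x = ((1 - x) + x * Real.log x) / (x - 1)^2 := by
        unfold shearerF
        rw [if_neg (not_le.mpr hx0), if_neg hx1']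
      have hsf1 : shearerF 1 = 1/2 := by norm_num [shearerF]
      have hslope : slope shearerF 1 x - (-(1/6)) = (t^4/3 + (1+t)*E) / t^3 := by
        rw [slope_def_field, hsf, hsf1]
        have hlx : Real.log x = (t - t^2/2 + t^3/3) + E := by rw [hEdef]; ring
        rw [hlx]
        have hx1t : x = 1 + t := by ring
        rw [hx1t]
        rw [show (1:ℝ) + t - 1 = t by ring]
        field_simp
        ring
      rw [hslope]
      rw [Real.norm_eq_abs, abs_div]
      rw [div_le_iff₀ (by positivity : (0:ℝ) < |t^3|)]
      have habs3 : |t^3| = |t|^3 := abs_pow t 3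
      have h1t : |1 + t| ≤ 3/2 := by
        rw [abs_le]; constructor <;> [linarith [abs_lt.1 htabs]; linarith [abs_lt.1 htabs]]
      rw [habs3]
      have e1 : |t ^ 4 / 3 + (1 + t) * E| ≤ |t ^ 4 / 3| + |(1 + t) * E| := abs_add_le _ _
      have e2 : |t ^ 4 / 3| = |t| ^ 4 / 3 := by
        rw [abs_div, abs_pow]; norm_num
      have e3 : |(1 + t) * E| ≤ (3 / 2) * (2 * |t| ^ 4) := by
        rw [abs_mul]
        exact mul_le_mul h1t hE (abs_nonneg _) (by norm_num)
      have e4 : |t| ^ 4 / 3 + (3 / 2) * (2 * |t| ^ 4) ≤ 4 * |t - 0| * |t| ^ 3 := by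
        rw [sub_zero]
        nlinarith [abs_nonneg t, pow_nonneg (abs_nonneg t) 3, pow_nonneg (abs_nonneg t) 4]
      rw [sub_zero] at e4
      have : (4 : ℝ) * |x - 1| * |t| ^ 3 = 4 * |t| * |t| ^ 3 := by rw [htdef]
      rw [this]
      linarith
    · have : Filter.Tendsto (fun x : ℝ => 4 * |x - 1|) (nhds 1) (nhds 0) := by
        have hcont : Continuous (fun x : ℝ => 4 * |x - 1|) := by continuity
        have := hcont.tendsto 1
        simpa using this
      exact this.mono_left nhdsWithin_le_nhds
  have h2 := key.add (tendsto_const_nhds (x := (-(1/6) : ℝ)))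
  have heq : (fun x : ℝ => slope shearerF 1 x - (-(1/6)) + (-(1/6))) = slope shearerF 1 := by
    funext y; ring
  rw [heq, zero_add] at h2
  exact h2

/-- `|x·f'(x)| < 1` for every `x > 0`. -/
theorem shearerF_deriv_bound :
    ∀ x : ℝ, 0 < x → |x * deriv shearerF x| < 1 := by
  intro x hx
  by_cases hx1 : x = 1
  · subst hx1
    rw [hasDerivAt_shearerF_one.deriv]
    rw [show (1:ℝ) * -(1/6) = -(1/6) by ring, abs_neg, abs_of_nonneg (by norm_num : (0:ℝ) ≤ 1/6)]
    norm_num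
  · exact main_ne_one hx hx1
end
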